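/- Let p, q ∈ ℂ[x,y] with Jac(p,q) = p_x q_y − p_y q_x ∈ ℂ*. In the Keller map proof setting, p and q have no common nonconstant factor in ℂ[x,y]: there is no r ∈ ℂ[x,y] of total degree at least 1 dividing both p and q. -/

import Mathlib

open MvPolynomial

noncomputable section

/-- The polynomial ring ℂ[x,y] (x = X 0, y = X 1). -/
abbrev Rxy : Type := MvPolynomial (Fin 2) ℂ

/-- The Jacobian Jac(p,q) = p_x q_y − p_y q_x. -/
def jacPQ (p q : Rxy) : Rxy :=
  pderiv 0 p * pderiv 1 q - pderiv 1 p * pderiv 0 q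

/-- (p,q) is a Keller map: Jac(p,q) is a nonzero constant. -/
def IsKeller (p q : Rxy) : Prop :=
  ∃ c : ℂ, c ≠ 0 ∧ jacPQ p q = C c

/-- A Keller pair (p,q) has no common nonconstant factor: there is no
polynomial of total degree at least 1 dividing both p and q. -/
theorem keller_no_common_nonconstant_factor (p q : Rxy) (hK : IsKeller p q) :
    ¬ ∃ r : Rxy, 1 ≤ r.totalDegree ∧ r ∣ p ∧ r ∣ q := by
  rintro ⟨r, hdeg, ⟨a, rfl⟩, ⟨b, rfl⟩⟩
  obtain ⟨c, hc, hjac⟩ := hK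
  -- r divides the Jacobian
  have hdvd : r ∣ MvPolynomial.C c := by
    rw [← hjac]
    refine ⟨pderiv 0 r * a * pderiv 1 b + pderiv 0 a * (pderiv 1 r * b)
      + r * (pderiv 0 a * pderiv 1 b) - pderiv 1 r * a * pderiv 0 b
      - pderiv 1 a * (pderiv 0 r * b) - r * (pderiv 1 a * pderiv 0 b), ?_⟩
    simp only [jacPQ, pderiv_mul]
    ring
  -- hence r is a unit
  have hCunit : IsUnit (MvPolynomial.C c : Rxy) :=
    IsUnit.of_mul_eq_one (a := (MvPolynomial.C c : Rxy)) (MvPolynomial.C c⁻¹) (by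
      rw [← MvPolynomial.C_mul, mul_inv_cancel₀ hc, MvPolynomial.C_1])
  have hrunit : IsUnit r := isUnit_of_dvd_unit hdvd hCunit
  -- a unit of ℂ[x,y] is a constant
  have h1 : IsUnit (MvPolynomial.finSuccEquiv ℂ 1 r) := hrunit.map _
  obtain ⟨u, hu, huC⟩ := Polynomial.isUnit_iff.mp h1
  have h2 : IsUnit (MvPolynomial.finSuccEquiv ℂ 0 u) := hu.map _
  obtain ⟨v, hv, hvC⟩ := Polynomial.isUnit_iff.mp h2
  obtain ⟨d, rfl⟩ := MvPolynomial.C_surjective (Fin 0) v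
  have key : ∀ n (e : ℂ), (MvPolynomial.finSuccEquiv ℂ n).symm
      (Polynomial.C (MvPolynomial.C e)) = MvPolynomial.C e := fun n e =>
    RingHom.congr_fun (MvPolynomial.finSuccEquiv_comp_C_eq_C n) e
  have hu' : u = MvPolynomial.C d := by
    have := congrArg (MvPolynomial.finSuccEquiv ℂ 0).symm hvC
    rw [AlgEquiv.symm_apply_apply, key] at this
    exact this.symm
  have hr' : r = MvPolynomial.C d := by
    have := congrArg (MvPolynomial.finSuccEquiv ℂ 1).symm huC
    rw [AlgEquiv.symm_apply_apply, hu', key] at this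
    exact this.symm
  rw [hr', MvPolynomial.totalDegree_C] at hdeg
  exact absurd hdeg (by norm_num)
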